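/- Let H be a real inner product space, V a finite index set, and for each v ∈ V let 𝟙_v be independent Bernoulli random variables with P(𝟙_v = 1) = p_v where 0 < p_v ≤ 1. Let G_v, h_v ∈ H be fixed vectors, β_v and q_v ≥ 0 fixed reals, and define the stale-augmented aggregate Δ = ∑_{v∈V} q_v·β_v·h_v + ∑_{v∈V} 𝟙_v·q_v·(G_v − β_v·h_v)/p_v. Then E[ ‖ Δ − ∑_{v∈V} q_v·G_v ‖² ] = ∑_{v∈V} ((1 − p_v)/p_v)·q_v²·‖G_v − β_v·h_v‖². -/

import Mathlib

open MeasureTheory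
open scoped ENNReal

/-- The product measure on `V → Bool` in which each coordinate is an independent
Bernoulli random variable with success probability `p v`. -/
noncomputable def bernoulliPi {V : Type*} [Fintype V] (p : V → ℝ) (hp1 : ∀ v, p v ≤ 1) :
    Measure (V → Bool) :=
  Measure.pi fun v =>
    (PMF.bernoulli (Real.toNNReal (p v)) (Real.toNNReal_le_one.mpr (hp1 v))).toMeasure

theorem stmt14 {H : Type*} [NormedAddCommGroup H] [InnerProductSpace ℝ H] [CompleteSpace H]
    {V : Type*} [Fintype V]
    (p : V → ℝ) (hp0 : ∀ v, 0 < p v) (hp1 : ∀ v, p v ≤ 1)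
    (G h : V → H) (β q : V → ℝ) (hq : ∀ v, 0 ≤ q v) :
    (∫ ω : V → Bool,
        ‖(∑ v, (q v * β v) • h v
            + ∑ v, (if ω v then (1 : ℝ) else 0) • (q v / p v) • (G v - β v • h v))
          - ∑ v, q v • G v‖ ^ 2 ∂(bernoulliPi p hp1))
      = ∑ v, ((1 - p v) / p v) * (q v) ^ 2 * ‖G v - β v • h v‖ ^ 2 := by
  classical
  have hpne : ∀ v, p v ≠ 0 := fun v => (hp0 v).ne'
  set a : V → H := fun v => G v - β v • h v with ha
  set D : V → Bool → ℝ := fun u b => ((if b then (1:ℝ) else 0) - p u) * (q u / p u) with hD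
  set wt : V → Bool → ℝ := fun v b => if b then p v else 1 - p v with hwt
  -- singleton measure
  have hμ : ∀ ω : V → Bool, ((bernoulliPi p hp1) {ω}).toReal = ∏ v, wt v (ω v) := by
    intro ω
    have hset : {ω} = Set.univ.pi fun v => {ω v} := (Set.univ_pi_singleton ω).symm
    rw [bernoulliPi, hset, Measure.pi_pi, ENNReal.toReal_prod]
    refine Finset.prod_congr rfl fun v _ => ?_
    rw [PMF.toMeasure_apply_singleton _ _ (measurableSet_singleton _), PMF.bernoulli_apply]
    cases hb : ω v
    · have h1 : (1 : NNReal) - Real.toNNReal (p v) = Real.toNNReal (1 - p v) := by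
        rw [NNReal.sub_def, NNReal.coe_one, Real.coe_toNNReal _ (hp0 v).le]
      simp [hwt, h1, Real.coe_toNNReal _ (by linarith [hp1 v] : (0:ℝ) ≤ 1 - p v)]
    · simp [hwt, Real.coe_toNNReal _ (hp0 v).le]
  haveI : IsProbabilityMeasure (bernoulliPi p hp1) := by
    unfold bernoulliPi; infer_instance
  -- rewrite the vector inside the norm
  have hvec : ∀ ω : V → Bool,
      ((∑ v, (q v * β v) • h v
        + ∑ v, (if ω v then (1 : ℝ) else 0) • (q v / p v) • (G v - β v • h v))
        - ∑ v, q v • G v) = ∑ v, D v (ω v) • a v := by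
    intro ω
    rw [← Finset.sum_add_distrib, ← Finset.sum_sub_distrib]
    refine Finset.sum_congr rfl fun v _ => ?_
    have hG : G v = a v + β v • h v := by simp [ha]
    have hsc : ((if ω v then (1:ℝ) else 0) * (q v / p v) - q v) = D v (ω v) := by
      cases hb : ω v <;> simp only [hD, hb, if_true, if_false] <;>
        field_simp [hpne v] <;> ring
    calc (q v * β v) • h v + (if ω v then (1:ℝ) else 0) • (q v / p v) • a v - q v • G v
        = ((if ω v then (1:ℝ) else 0) * (q v / p v)) • a v - q v • a v := by
          rw [hG, smul_add, smul_smul, smul_smul]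
          abel
      _ = ((if ω v then (1:ℝ) else 0) * (q v / p v) - q v) • a v := by rw [sub_smul]
      _ = D v (ω v) • a v := by rw [hsc]
  have hnorm : ∀ ω : V → Bool, ‖∑ v, D v (ω v) • a v‖ ^ 2
      = ∑ v, ∑ w, (D v (ω v) * D w (ω w)) * (inner ℝ (a v) (a w) : ℝ) := by
    intro ω
    rw [← real_inner_self_eq_norm_sq, sum_inner]
    refine Finset.sum_congr rfl fun v _ => ?_
    rw [inner_sum]
    refine Finset.sum_congr rfl fun w _ => ?_
    rw [real_inner_smul_left, real_inner_smul_right]; ring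
  -- key second-moment computation
  have hwt_sum : ∀ u, wt u true + wt u false = 1 := by intro u; simp [hwt]
  have key : ∀ v w : V, (∑ ω : V → Bool, (∏ u, wt u (ω u)) * (D v (ω v) * D w (ω w)))
      = if v = w then ((1 - p v) / p v) * q v ^ 2 else 0 := by
    intro v w
    by_cases hvw : v = w
    · subst hvw
      simp only [if_pos rfl]
      have step : ∀ ω : V → Bool, (∏ u, wt u (ω u)) * (D v (ω v) * D v (ω v))
          = ∏ u, (wt u (ω u) * (if u = v then D u (ω u) ^ 2 else 1)) := by
        intro ω
        rw [Finset.prod_mul_distrib, Finset.prod_ite_eq' Finset.univ v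
          (fun u => D u (ω u) ^ 2)]
        simp [sq]
      simp only [step]
      rw [← Fintype.piFinset_univ, ← Finset.prod_univ_sum
        (fun _ => (Finset.univ : Finset Bool))
        (fun u b => wt u b * (if u = v then D u b ^ 2 else 1))]
      have factor : ∀ u, (∑ b : Bool, wt u b * (if u = v then D u b ^ 2 else 1))
          = if u = v then ((1 - p u) / p u) * q u ^ 2 else 1 := by
        intro u
        by_cases huv : u = v
        · subst huv
          rw [if_pos rfl, Fintype.sum_bool]
          simp only [if_pos rfl, hwt, hD, if_true, if_false]
          norm_num
          field_simp
          rw [div_eq_div_iff (hpne u) (hpne u)]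
          ring
        · rw [if_neg huv, Fintype.sum_bool]
          simp only [if_neg huv, mul_one, hwt]
          norm_num
      rw [Finset.prod_congr rfl fun u _ => factor u,
        Finset.prod_ite_eq' Finset.univ v (fun u => ((1 - p u) / p u) * q u ^ 2)]
      simp
    · simp only [if_neg hvw]
      have step : ∀ ω : V → Bool, (∏ u, wt u (ω u)) * (D v (ω v) * D w (ω w))
          = ∏ u, (wt u (ω u) * ((if u = v then D u (ω u) else 1)
              * (if u = w then D u (ω u) else 1))) := by
        intro ω
        rw [Finset.prod_mul_distrib, Finset.prod_mul_distrib,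
          Finset.prod_ite_eq' Finset.univ v (fun u => D u (ω u)),
          Finset.prod_ite_eq' Finset.univ w (fun u => D u (ω u))]
        simp
      simp only [step]
      rw [← Fintype.piFinset_univ, ← Finset.prod_univ_sum
        (fun _ => (Finset.univ : Finset Bool))
        (fun u b => wt u b * ((if u = v then D u b else 1) * (if u = w then D u b else 1)))]
      refine Finset.prod_eq_zero (Finset.mem_univ v) ?_
      rw [Fintype.sum_bool]
      simp only [if_pos rfl, if_neg hvw, mul_one, hwt, hD, if_true, if_false]
      norm_num
      field_simp
      ring
  -- put it together
  rw [integral_fintype Integrable.of_finite]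
  calc ∑ ω : V → Bool, ((bernoulliPi p hp1) {ω}).toReal •
        ‖(∑ v, (q v * β v) • h v
            + ∑ v, (if ω v then (1 : ℝ) else 0) • (q v / p v) • (G v - β v • h v))
          - ∑ v, q v • G v‖ ^ 2
      = ∑ ω : V → Bool, (∏ u, wt u (ω u)) *
          ∑ v, ∑ w, (D v (ω v) * D w (ω w)) * (inner ℝ (a v) (a w) : ℝ) := by
        refine Finset.sum_congr rfl fun ω _ => ?_
        rw [smul_eq_mul, hμ ω, hvec ω, hnorm ω]
    _ = ∑ v, ∑ w, (∑ ω : V → Bool, (∏ u, wt u (ω u)) * (D v (ω v) * D w (ω w)))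
          * (inner ℝ (a v) (a w) : ℝ) := by
        simp only [Finset.mul_sum, Finset.sum_mul]
        rw [Finset.sum_comm]
        refine Finset.sum_congr rfl fun v _ => ?_
        rw [Finset.sum_comm]
        refine Finset.sum_congr rfl fun w _ => ?_
        refine Finset.sum_congr rfl fun ω _ => by ring
    _ = ∑ v, ((1 - p v) / p v) * q v ^ 2 * ‖a v‖ ^ 2 := by
        simp only [key, ite_mul, zero_mul, Finset.sum_ite_eq, Finset.mem_univ, if_true,
          real_inner_self_eq_norm_sq]
    _ = ∑ v, ((1 - p v) / p v) * (q v) ^ 2 * ‖G v - β v • h v‖ ^ 2 := by simp [ha]
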